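/- Let S ⊆ F_2^n be a Sidon set and p ∈ F_2^n \ S. Then the number of points of S adjacent to p in Cay(γ_S) equals 3·mult_S(p), i.e., |(p+S) ∩ (S+S)| = 3·mult_S(p). -/

import Mathlib

open Finset
def dotp {n : ℕ} (a x : Fin n → ZMod 2) : ZMod 2 := ∑ i, a i * x i
def chi {n : ℕ} (a x : Fin n → ZMod 2) : ℤ := (-1 : ℤ) ^ (dotp a x).val
def fourierS {n : ℕ} (S : Finset (Fin n → ZMod 2)) (u : Fin n → ZMod 2) : ℤ :=
  ∑ x ∈ S, chi u x
def IsSidon {n : ℕ} (S : Set (Fin n → ZMod 2)) : Prop :=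
  ∀ a ∈ S, ∀ b ∈ S, ∀ c ∈ S, ∀ d ∈ S,
    a ≠ b → c ≠ d → a + b = c + d → ({a, b} : Set (Fin n → ZMod 2)) = {c, d}
def IsKCover {n : ℕ} (S : Finset (Fin n → ZMod 2)) (k : ℕ) : Prop :=
  0 < k ∧ ∀ p ∉ S,
    {T : Finset (Fin n → ZMod 2) | T ⊆ S ∧ T.card = 3 ∧ ∑ x ∈ T, x = p}.ncard = k
def cayGamma {n : ℕ} (S : Set (Fin n → ZMod 2)) : SimpleGraph (Fin n → ZMod 2) where
  Adj u v := u + v ≠ 0 ∧ ∃ x ∈ S, (u + v) + x ∈ S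
  symm := by constructor; intro u v h; rwa [add_comm v u]
  loopless := by
    constructor
    intro u h
    apply h.1
    funext i
    exact CharTwo.add_self_eq_zero (u i)

private lemma vadd_self {n : ℕ} (v : Fin n → ZMod 2) : v + v = 0 :=
  funext fun i => CharTwo.add_self_eq_zero (v i)

private lemma eq_of_add_eq_zero' {n : ℕ} {u v : Fin n → ZMod 2} (h : u + v = 0) : u = v := by
  have : u + (v + v) = (u + v) + v := (add_assoc u v v).symm
  rw [vadd_self, h, add_zero, zero_add] at this
  exact this

private lemma erase_pair {n : ℕ} {S : Finset (Fin n → ZMod 2)} {p : Fin n → ZMod 2}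
    {T : Finset (Fin n → ZMod 2)} (hT : T ⊆ S) (h3 : T.card = 3) (hsum : ∑ x ∈ T, x = p)
    {a : Fin n → ZMod 2} (ha : a ∈ T) :
    ∃ b c, b ∈ S ∧ c ∈ S ∧ b ≠ c ∧ T.erase a = {b, c} ∧ b + c = p + a := by
  have hc2 : (T.erase a).card = 2 := by rw [Finset.card_erase_of_mem ha, h3]
  obtain ⟨b, c, hbc, he⟩ := Finset.card_eq_two.mp hc2
  have hbT : b ∈ T.erase a := he ▸ Finset.mem_insert_self b {c}
  have hcT : c ∈ T.erase a := he ▸ (by simp : c ∈ ({b, c} : Finset _))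
  have hs : ∑ x ∈ T.erase a, x = b + c := by rw [he, Finset.sum_pair hbc]
  have hap : a + (b + c) = p := by
    rw [← hs, ← hsum]
    exact Finset.add_sum_erase T id ha
  refine ⟨b, c, hT (Finset.mem_of_mem_erase hbT), hT (Finset.mem_of_mem_erase hcT), hbc, he, ?_⟩
  calc b + c = a + (a + (b + c)) := by rw [← add_assoc, vadd_self, zero_add]
    _ = a + p := by rw [hap]
    _ = p + a := add_comm a p

private lemma triple_unique {n : ℕ} {S : Finset (Fin n → ZMod 2)} {p : Fin n → ZMod 2}
    (hS : IsSidon (S : Set (Fin n → ZMod 2)))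
    {T₁ T₂ : Finset (Fin n → ZMod 2)} {a : Fin n → ZMod 2}
    (h₁ : T₁ ⊆ S ∧ T₁.card = 3 ∧ ∑ x ∈ T₁, x = p)
    (h₂ : T₂ ⊆ S ∧ T₂.card = 3 ∧ ∑ x ∈ T₂, x = p)
    (ha₁ : a ∈ T₁) (ha₂ : a ∈ T₂) : T₁ = T₂ := by
  obtain ⟨b, c, hb, hc, hbc, he1, hsum1⟩ := erase_pair h₁.1 h₁.2.1 h₁.2.2 ha₁
  obtain ⟨b', c', hb', hc', hbc', he2, hsum2⟩ := erase_pair h₂.1 h₂.2.1 h₂.2.2 ha₂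
  have hpair := hS b hb c hc b' hb' c' hc' hbc hbc' (hsum1.trans hsum2.symm)
  have hfin : ({b, c} : Finset (Fin n → ZMod 2)) = {b', c'} := by
    apply Finset.coe_injective
    simpa using hpair
  calc T₁ = insert a (T₁.erase a) := (Finset.insert_erase ha₁).symm
    _ = insert a (T₂.erase a) := by rw [he1, he2, hfin]
    _ = T₂ := Finset.insert_erase ha₂

open scoped Pointwise in
theorem stmt14 {n : ℕ} (S : Finset (Fin n → ZMod 2))
    (hS : IsSidon (S : Set (Fin n → ZMod 2))) (p : Fin n → ZMod 2) (hp : p ∉ S) :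
    (((fun x => p + x) '' (S : Set (Fin n → ZMod 2)))
        ∩ ((S : Set (Fin n → ZMod 2)) + (S : Set (Fin n → ZMod 2)))).ncard
      = 3 * {T : Finset (Fin n → ZMod 2) | T ⊆ S ∧ T.card = 3 ∧ ∑ x ∈ T, x = p}.ncard := by
  classical
  set 𝒯 : Finset (Finset (Fin n → ZMod 2)) :=
    S.powerset.filter (fun T => T.card = 3 ∧ ∑ x ∈ T, x = p) with h𝒯
  have hmemT : ∀ T, T ∈ 𝒯 ↔ T ⊆ S ∧ T.card = 3 ∧ ∑ x ∈ T, x = p := by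
    intro T
    simp [h𝒯, Finset.mem_filter, Finset.mem_powerset, and_assoc]
  have hset : {T : Finset (Fin n → ZMod 2) | T ⊆ S ∧ T.card = 3 ∧ ∑ x ∈ T, x = p}
      = (𝒯 : Set (Finset (Fin n → ZMod 2))) := by
    ext T; simp [hmemT T]
  rw [hset, Set.ncard_coe_finset]
  set B : Finset (Fin n → ZMod 2) := 𝒯.biUnion id with hB
  have hAeq : ((fun x => p + x) '' (S : Set (Fin n → ZMod 2)))
      ∩ ((S : Set (Fin n → ZMod 2)) + (S : Set (Fin n → ZMod 2)))
      = (fun x => p + x) '' (B : Set (Fin n → ZMod 2)) := by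
    ext y
    constructor
    · rintro ⟨⟨a, ha, rfl⟩, hy2⟩
      obtain ⟨b, hb, c, hc, hbcy0⟩ := Set.mem_add.mp hy2
      have hbcy : b + c = p + a := hbcy0
      have ha' : a ∈ S := ha
      have hb' : b ∈ S := hb
      have hc' : c ∈ S := hc
      have hbc : b ≠ c := by
        rintro rfl
        refine hp ((eq_of_add_eq_zero' (u := p) (v := a) ?_) ▸ ha')
        rw [← hbcy, vadd_self]
      have hab : a ≠ b := by
        rintro rfl
        have hcp : c = p := by
          calc c = a + (a + c) := by rw [← add_assoc, vadd_self, zero_add]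
            _ = a + (p + a) := by rw [hbcy]
            _ = p := by rw [add_comm p a, ← add_assoc, vadd_self, zero_add]
        exact hp (hcp ▸ hc')
      have hac : a ≠ c := by
        rintro rfl
        have hbp : b = p := by
          calc b = (b + a) + a := by rw [add_assoc, vadd_self, add_zero]
            _ = (p + a) + a := by rw [hbcy]
            _ = p := by rw [add_assoc, vadd_self, add_zero]
        exact hp (hbp ▸ hb')
      have hanot : a ∉ ({b, c} : Finset (Fin n → ZMod 2)) := by
        simp [hab, hac]
      have hT : ({a, b, c} : Finset (Fin n → ZMod 2)) ∈ 𝒯 := by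
        rw [hmemT]
        refine ⟨?_, ?_, ?_⟩
        · intro x hx
          simp only [Finset.mem_insert, Finset.mem_singleton] at hx
          rcases hx with rfl | rfl | rfl <;> assumption
        · rw [Finset.card_insert_of_notMem hanot, Finset.card_insert_of_notMem (by simp [hbc]),
            Finset.card_singleton]
        · rw [Finset.sum_insert hanot, Finset.sum_pair hbc, hbcy, add_comm p a, ← add_assoc,
            vadd_self, zero_add]
      refine ⟨a, ?_, rfl⟩
      exact Finset.mem_biUnion.mpr ⟨_, hT, Finset.mem_insert_self a {b, c}⟩
    · rintro ⟨a, haB, rfl⟩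
      obtain ⟨T, hT, haT⟩ := Finset.mem_biUnion.mp haB
      obtain ⟨hTS, h3, hsum⟩ := (hmemT T).mp hT
      obtain ⟨b, c, hb, hc, hbc, he, hbcsum⟩ := erase_pair hTS h3 hsum haT
      refine ⟨⟨a, hTS haT, rfl⟩, ?_⟩
      show p + a ∈ _
      rw [← hbcsum]
      exact Set.add_mem_add hb hc
  rw [hAeq, Set.ncard_image_of_injective _ (add_right_injective p), Set.ncard_coe_finset, hB,
    Finset.card_biUnion]
  · have h3 : ∀ T ∈ 𝒯, (id T).card = 3 := fun T hT => ((hmemT T).mp hT).2.1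
    rw [Finset.sum_congr rfl h3, Finset.sum_const, smul_eq_mul, mul_comm]
  · intro T₁ h₁ T₂ h₂ hne
    rw [Function.onFun, Finset.disjoint_left]
    intro a ha₁ ha₂
    exact hne (triple_unique hS ((hmemT T₁).mp h₁) ((hmemT T₂).mp h₂) ha₁ ha₂)
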